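/- Let $X$ be a nonnegative real random variable and suppose the right abscissa of convergence $\beta = \sup\{u \in \mathbb{R} : \mathbb{E}[e^{uX}] < \infty\}$ is finite with $\beta > 0$. Then $M_X(u) = \mathbb{E}[e^{uX}]$ has a singularity at $\beta$: there is no real-analytic function on an open interval containing $\beta$ that agrees with $M_X$ on $(\beta - \epsilon, \beta)$ for some $\epsilon > 0$ and is the restriction of an analytic extension of $M_X$. -/

import Mathlib

open MeasureTheory Set ProbabilityTheory
open Real
open scoped Nat ENNReal NNReal Topology

open scoped Nat ENNReal NNReal Topology

namespace LPaux

variable {Ω : Type*} [MeasurableSpace Ω] {μ : Measure Ω} {X : Ω → ℝ}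

lemma int_mono (hX : Measurable X) (hXpos : ∀ ω, 0 ≤ X ω) {u v : ℝ} (huv : u ≤ v)
    (hv : Integrable (fun ω => exp (v * X ω)) μ) :
    Integrable (fun ω => exp (u * X ω)) μ := by
  refine hv.mono ((hX.const_mul u).exp.aestronglyMeasurable) ?_
  filter_upwards with ω
  rw [Real.norm_of_nonneg (exp_nonneg _), Real.norm_of_nonneg (exp_nonneg _)]
  exact exp_le_exp.2 (mul_le_mul_of_nonneg_right huv (hXpos ω))

lemma pow_div_fact_le {x : ℝ} (hx : 0 ≤ x) (n : ℕ) : x ^ n / n ! ≤ exp x := by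
  calc x ^ n / n ! ≤ ∑ i ∈ Finset.range (n + 1), x ^ i / i ! := by
        exact Finset.single_le_sum (f := fun i => x ^ i / (i ! : ℝ))
          (fun i _ => div_nonneg (pow_nonneg hx _) (by positivity))
          (Finset.self_mem_range_succ n)
    _ ≤ exp x := Real.sum_le_exp_of_nonneg hx _

lemma int_pow (hX : Measurable X) (hXpos : ∀ ω, 0 ≤ X ω) {u v : ℝ} (huv : u < v)
    (hv : Integrable (fun ω => exp (v * X ω)) μ) (n : ℕ) :
    Integrable (fun ω => X ω ^ n * exp (u * X ω)) μ := by
  refine Integrable.mono (hv.const_mul ((n ! : ℝ) / (v - u) ^ n))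
    (((hX.pow_const n).mul (hX.const_mul u).exp).aestronglyMeasurable) ?_
  filter_upwards with ω
  have hx := hXpos ω
  have hvu : (0:ℝ) < v - u := sub_pos.2 huv
  rw [Real.norm_of_nonneg (mul_nonneg (pow_nonneg hx _) (exp_nonneg _)),
    Real.norm_of_nonneg (mul_nonneg (div_nonneg (by positivity) (by positivity)) (exp_nonneg _))]
  have h1 : X ω ^ n ≤ (n ! : ℝ) / (v - u) ^ n * exp ((v - u) * X ω) := by
    have key : ((v - u) * X ω) ^ n / n ! ≤ exp ((v - u) * X ω) :=
      pow_div_fact_le (mul_nonneg hvu.le hx) n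
    rw [mul_pow, div_le_iff₀ (by positivity)] at key
    calc X ω ^ n = ((v - u) ^ n * X ω ^ n) / (v - u) ^ n := by field_simp
      _ ≤ (exp ((v - u) * X ω) * n !) / (v - u) ^ n := by gcongr
      _ = (n ! : ℝ) / (v - u) ^ n * exp ((v - u) * X ω) := by ring
  calc X ω ^ n * exp (u * X ω) ≤ ((n ! : ℝ) / (v - u) ^ n * exp ((v - u) * X ω)) * exp (u * X ω) :=
        mul_le_mul_of_nonneg_right h1 (exp_nonneg _)
    _ = (n ! : ℝ) / (v - u) ^ n * exp (v * X ω) := by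
        rw [mul_assoc, ← Real.exp_add]; ring_nf

lemma exp_tsum (y x u0 : ℝ) :
    ∑' n : ℕ, y ^ n / n ! * (x ^ n * exp (u0 * x)) = exp ((u0 + y) * x) := by
  have h1 : Real.exp (y * x) = ∑' n : ℕ, (y * x) ^ n / n ! := by
    rw [Real.exp_eq_exp_ℝ, NormedSpace.exp_eq_tsum_div]
  have h2 : ∀ n : ℕ, y ^ n / n ! * (x ^ n * exp (u0 * x)) = (y * x) ^ n / n ! * exp (u0 * x) := by
    intro n; rw [mul_pow]; ring
  calc ∑' n : ℕ, y ^ n / n ! * (x ^ n * exp (u0 * x))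
      = ∑' n : ℕ, (y * x) ^ n / n ! * exp (u0 * x) := by simp_rw [h2]
    _ = (∑' n : ℕ, (y * x) ^ n / n !) * exp (u0 * x) := tsum_mul_right
    _ = exp (y * x) * exp (u0 * x) := by rw [h1]
    _ = exp ((u0 + y) * x) := by rw [← Real.exp_add]; ring_nf

lemma summable_term (y x u0 : ℝ) :
    Summable (fun n : ℕ => y ^ n / n ! * (x ^ n * exp (u0 * x))) := by
  have h2 : ∀ n : ℕ, y ^ n / n ! * (x ^ n * exp (u0 * x)) = (y * x) ^ n / n ! * exp (u0 * x) := by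
    intro n; rw [mul_pow]; ring
  simp_rw [h2]
  exact (Real.summable_pow_div_factorial (y * x)).mul_right _

lemma lint_eq (hX : Measurable X) (hXpos : ∀ ω, 0 ≤ X ω) (u0 : ℝ) {t : ℝ} (ht : 0 ≤ t) :
    ∫⁻ ω, ENNReal.ofReal (exp ((u0 + t) * X ω)) ∂μ
      = ∑' n : ℕ, ∫⁻ ω, ENNReal.ofReal (t ^ n / n ! * (X ω ^ n * exp (u0 * X ω))) ∂μ := by
  rw [← lintegral_tsum (f := fun n ω => ENNReal.ofReal (t ^ n / n ! * (X ω ^ n * exp (u0 * X ω))))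
    (fun n => (((hX.pow_const n).mul (hX.const_mul u0).exp).const_mul
    (t ^ n / n !)).ennreal_ofReal.aemeasurable)]
  refine lintegral_congr fun ω => ?_
  have hnn : ∀ n : ℕ, 0 ≤ t ^ n / n ! * (X ω ^ n * exp (u0 * X ω)) := fun n => by
    have := hXpos ω; positivity
  rw [← ENNReal.ofReal_tsum_of_nonneg hnn (summable_term t (X ω) u0), exp_tsum]

lemma lint_term (hX : Measurable X) (hXpos : ∀ ω, 0 ≤ X ω) {u0 v : ℝ} (huv : u0 < v)
    (hv : Integrable (fun ω => exp (v * X ω)) μ) {t : ℝ} (ht : 0 ≤ t) (n : ℕ) :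
    ∫⁻ ω, ENNReal.ofReal (t ^ n / n ! * (X ω ^ n * exp (u0 * X ω))) ∂μ
      = ENNReal.ofReal (t ^ n / n ! * ∫ ω, X ω ^ n * exp (u0 * X ω) ∂μ) := by
  rw [← MeasureTheory.integral_const_mul, ofReal_integral_eq_lintegral_ofReal
    ((int_pow hX hXpos huv hv n).const_mul _) ?_]
  filter_upwards with ω
  have := hXpos ω
  positivity

lemma integral_pow_nonneg (hXpos : ∀ ω, 0 ≤ X ω) (u0 : ℝ) (n : ℕ) :
    0 ≤ ∫ ω, X ω ^ n * exp (u0 * X ω) ∂μ := by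
  refine integral_nonneg fun ω => ?_
  have := hXpos ω
  positivity

lemma summable_forward (hX : Measurable X) (hXpos : ∀ ω, 0 ≤ X ω) {u0 v t : ℝ} (huv : u0 < v)
    (hv : Integrable (fun ω => exp (v * X ω)) μ) (ht : 0 ≤ t) (htv : u0 + t ≤ v) :
    Summable (fun n : ℕ => t ^ n / n ! * ∫ ω, X ω ^ n * exp (u0 * X ω) ∂μ) := by
  have hfin : ∑' n : ℕ, ENNReal.ofReal (t ^ n / n ! * ∫ ω, X ω ^ n * exp (u0 * X ω) ∂μ) ≠ ⊤ := by
    have h1 : ∀ n : ℕ, ENNReal.ofReal (t ^ n / n ! * ∫ ω, X ω ^ n * exp (u0 * X ω) ∂μ)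
        = ∫⁻ ω, ENNReal.ofReal (t ^ n / n ! * (X ω ^ n * exp (u0 * X ω))) ∂μ :=
      fun n => (lint_term hX hXpos huv hv ht n).symm
    simp_rw [h1]
    rw [← lint_eq hX hXpos u0 ht]
    have hint : Integrable (fun ω => exp ((u0 + t) * X ω)) μ := int_mono hX hXpos htv hv
    have := hint.hasFiniteIntegral
    rw [HasFiniteIntegral] at this
    refine ne_of_lt (lt_of_le_of_lt (le_of_eq ?_) this)
    refine lintegral_congr fun ω => ?_
    rw [← Real.enorm_eq_ofReal (exp_nonneg _)]
  have := ENNReal.summable_toReal hfin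
  refine this.congr fun n => ?_
  rw [ENNReal.toReal_ofReal]
  have h2 := integral_pow_nonneg (μ := μ) hXpos u0 n
  positivity

lemma integrable_backward (hX : Measurable X) (hXpos : ∀ ω, 0 ≤ X ω) {u0 v t : ℝ} (huv : u0 < v)
    (hv : Integrable (fun ω => exp (v * X ω)) μ) (ht : 0 ≤ t)
    (hsum : Summable (fun n : ℕ => t ^ n / n ! * ∫ ω, X ω ^ n * exp (u0 * X ω) ∂μ)) :
    Integrable (fun ω => exp ((u0 + t) * X ω)) μ := by
  refine ⟨((hX.const_mul _).exp).aestronglyMeasurable, ?_⟩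
  show (∫⁻ ω, (‖exp ((u0 + t) * X ω)‖₊ : ℝ≥0∞) ∂μ) < ⊤
  have heq : ∫⁻ ω, (‖exp ((u0 + t) * X ω)‖₊ : ℝ≥0∞) ∂μ
      = ∫⁻ ω, ENNReal.ofReal (exp ((u0 + t) * X ω)) ∂μ :=
    lintegral_congr fun ω => Real.enorm_eq_ofReal (exp_nonneg _)
  rw [heq, lint_eq hX hXpos u0 ht]
  have h1 : ∀ n : ℕ, ∫⁻ ω, ENNReal.ofReal (t ^ n / n ! * (X ω ^ n * exp (u0 * X ω))) ∂μ
      = ENNReal.ofReal (t ^ n / n ! * ∫ ω, X ω ^ n * exp (u0 * X ω) ∂μ) :=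
    fun n => lint_term hX hXpos huv hv ht n
  simp_rw [h1]
  have hnn : ∀ n : ℕ, 0 ≤ t ^ n / n ! * ∫ ω, X ω ^ n * exp (u0 * X ω) ∂μ := fun n => by
    have h2 := integral_pow_nonneg (μ := μ) hXpos u0 n
    positivity
  rw [← ENNReal.ofReal_tsum_of_nonneg hnn hsum]
  exact ENNReal.ofReal_lt_top

noncomputable def mgfSeries (X : Ω → ℝ) (μ : Measure Ω) (u0 : ℝ) :
    FormalMultilinearSeries ℝ ℝ ℝ :=
  FormalMultilinearSeries.ofScalars ℝ fun n => (∫ ω, X ω ^ n * exp (u0 * X ω) ∂μ) / n !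

lemma mgf_hasFPS (hX : Measurable X) (hXpos : ∀ ω, 0 ≤ X ω) {u0 v : ℝ} (huv : u0 < v)
    (hv : Integrable (fun ω => exp (v * X ω)) μ) :
    HasFPowerSeriesOnBall (mgf X μ) (mgfSeries X μ u0) u0 (ENNReal.ofReal (v - u0)) := by
  constructor
  · refine ENNReal.le_of_forall_nnreal_lt fun s hs => ?_
    apply FormalMultilinearSeries.le_radius_of_summable_norm
    have hs' : (s : ℝ) < v - u0 := by
      rw [← ENNReal.ofReal_coe_nnreal] at hs
      exact (ENNReal.ofReal_lt_ofReal_iff_of_nonneg s.coe_nonneg).mp hs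
    have hsum := summable_forward hX hXpos huv hv s.coe_nonneg (by linarith)
    refine hsum.congr fun n => ?_
    rw [mgfSeries, FormalMultilinearSeries.ofScalars_norm, Real.norm_eq_abs,
      abs_of_nonneg (div_nonneg (integral_pow_nonneg hXpos u0 n) (by positivity))]
    ring
  · exact ENNReal.ofReal_pos.2 (sub_pos.2 huv)
  · intro y hy
    have hy' : |y| < v - u0 := by
      rw [EMetric.mem_ball, edist_zero_right, ← ofReal_norm] at hy
      rw [← Real.norm_eq_abs]
      exact (ENNReal.ofReal_lt_ofReal_iff_of_nonneg (norm_nonneg y)).mp hy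
    simp only [mgfSeries, FormalMultilinearSeries.ofScalars_apply_eq, smul_eq_mul]
    set F : ℕ → Ω → ℝ := fun n ω => y ^ n / n ! * (X ω ^ n * exp (u0 * X ω)) with hF
    have hF_int : ∀ n, Integrable (F n) μ := fun n =>
      (int_pow hX hXpos huv hv n).const_mul _
    have hF_sum : Summable fun n => ∫ ω, ‖F n ω‖ ∂μ := by
      have hnorm : ∀ n, (fun ω => ‖F n ω‖)
          = fun ω => |y| ^ n / n ! * (X ω ^ n * exp (u0 * X ω)) := by
        intro n
        funext ω
        have hx := hXpos ω
        rw [hF, Real.norm_eq_abs, abs_mul, abs_of_nonneg (by positivity : (0:ℝ) ≤ X ω ^ n * exp (u0 * X ω)),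
          abs_div, abs_pow, Nat.abs_cast]
      have := summable_forward hX hXpos huv hv (abs_nonneg y) (by linarith)
      refine this.congr fun n => ?_
      rw [hnorm n, MeasureTheory.integral_const_mul]
    have h := hasSum_integral_of_summable_integral_norm hF_int hF_sum
    have hval : ∫ ω, (∑' n, F n ω) ∂μ = mgf X μ (u0 + y) := by
      refine integral_congr_ae (Filter.Eventually.of_forall fun ω => ?_)
      exact exp_tsum y (X ω) u0
    have hterm : (fun n : ℕ => ∫ ω, F n ω ∂μ)
        = fun n => (∫ ω, X ω ^ n * exp (u0 * X ω) ∂μ) / n ! * y ^ n := by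
      funext n
      rw [hF, MeasureTheory.integral_const_mul]
      ring
    rw [hterm, hval] at h
    exact h

end LPaux


/-- Landau–Pringsheim for Laplace transforms of nonnegative random variables:
if the right abscissa of convergence `β` of the moment generating function is
finite and positive, then `β` is a singular point: no function real-analytic on
a neighborhood of `β` agrees with `M_X` on a left neighborhood `(β-ε, β)`. -/
theorem stmt_16 {Ω : Type*} [MeasurableSpace Ω] (μ : Measure Ω) [IsProbabilityMeasure μ]
    (X : Ω → ℝ) (hX : Measurable X) (hXpos : ∀ ω, 0 ≤ X ω)
    (β : ℝ) (hβpos : 0 < β)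
    (hbdd : BddAbove {u : ℝ | Integrable (fun ω => Real.exp (u * X ω)) μ})
    (hβ : β = sSup {u : ℝ | Integrable (fun ω => Real.exp (u * X ω)) μ}) :
    ¬ ∃ (g : ℝ → ℝ) (δ : ℝ), 0 < δ ∧
      (∀ x ∈ Ioo (β - δ) (β + δ), AnalyticAt ℝ g x) ∧
      ∃ ε > 0, ∀ u ∈ Ioo (β - ε) β, g u = mgf X μ u := by
  rintro ⟨g, δ, hδ, hg, ε, hε, heq⟩
  have hS0 : (0:ℝ) ∈ {u : ℝ | Integrable (fun ω => Real.exp (u * X ω)) μ} := by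
    simp only [Set.mem_setOf_eq, zero_mul, Real.exp_zero]
    exact integrable_const 1
  have hIio : ∀ u : ℝ, u < β → Integrable (fun ω => Real.exp (u * X ω)) μ := by
    intro u hu
    obtain ⟨s, hsS, hus⟩ := exists_lt_of_lt_csSup ⟨0, hS0⟩ (hβ ▸ hu)
    exact LPaux.int_mono hX hXpos hus.le hsS
  obtain ⟨p, r, hp⟩ := hg β ⟨by linarith, by linarith⟩
  obtain ⟨r', hr'0, hr'r⟩ := ENNReal.lt_iff_exists_nnreal_btwn.mp hp.r_pos
  have hr'pos : (0:ℝ) < (r' : ℝ) := by exact_mod_cast hr'0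
  set ρ : ℝ := min ((r' : ℝ)/4) (ε/2) with hρdef
  have hρ : 0 < ρ := lt_min (by linarith) (by linarith)
  have hρr : ρ ≤ (r' : ℝ)/4 := min_le_left _ _
  have hρε : ρ ≤ ε/2 := min_le_right _ _
  set u0 : ℝ := β - ρ with hu0def
  have hu0β : u0 < β := by simp only [hu0def]; linarith
  -- the change-of-origin series for g at u0
  have hnorm : (‖(-ρ : ℝ)‖₊ : ℝ≥0∞) < r := by
    rw [← enorm_eq_nnnorm, ← ofReal_norm, norm_neg, Real.norm_of_nonneg hρ.le]
    calc ENNReal.ofReal ρ ≤ ENNReal.ofReal ((r' : ℝ)/4) := ENNReal.ofReal_le_ofReal hρr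
      _ < ENNReal.ofReal (r' : ℝ) := by
          rw [ENNReal.ofReal_lt_ofReal_iff hr'pos]; linarith
      _ = (r' : ℝ≥0∞) := ENNReal.ofReal_coe_nnreal
      _ < r := hr'r
  have hq := hp.changeOrigin hnorm
  rw [show β + (-ρ) = u0 from by rw [hu0def]; ring] at hq
  -- g agrees with mgf near u0
  have hgm : g =ᶠ[𝓝 u0] mgf X μ := by
    have hmem : Ioo (β - ε) β ∈ 𝓝 u0 := Ioo_mem_nhds (by simp only [hu0def]; linarith) hu0β
    filter_upwards [hmem] with x hx using heq x hx
  have hq' : HasFPowerSeriesAt (mgf X μ) (p.changeOrigin (-ρ)) u0 :=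
    hq.hasFPowerSeriesAt.congr hgm
  -- mgf has its canonical power series at u0
  set v : ℝ := β - ρ/2 with hvdef
  have hu0v : u0 < v := by simp only [hu0def, hvdef]; linarith
  have hv : Integrable (fun ω => Real.exp (v * X ω)) μ := hIio v (by simp only [hvdef]; linarith)
  have hP := LPaux.mgf_hasFPS hX hXpos hu0v hv
  have hPq : LPaux.mgfSeries X μ u0 = p.changeOrigin (-ρ) :=
    hP.hasFPowerSeriesAt.eq_formalMultilinearSeries hq'
  have hrad : r - (‖(-ρ : ℝ)‖₊ : ℝ≥0∞) ≤ (LPaux.mgfSeries X μ u0).radius := by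
    rw [hPq]; exact hq.r_le
  -- the series is summable at 2ρ
  have hofreal : (((2*ρ).toNNReal : ℝ≥0) : ℝ≥0∞) = ENNReal.ofReal (2*ρ) := rfl
  have hlt : (((2*ρ).toNNReal : ℝ≥0) : ℝ≥0∞) < (LPaux.mgfSeries X μ u0).radius := by
    refine lt_of_lt_of_le ?_ hrad
    rw [hofreal, lt_tsub_iff_right, ← enorm_eq_nnnorm, ← ofReal_norm, norm_neg,
      Real.norm_of_nonneg hρ.le, ← ENNReal.ofReal_add (by linarith) hρ.le]
    calc ENNReal.ofReal (2*ρ + ρ) ≤ ENNReal.ofReal (3*((r' : ℝ)/4)) := by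
          refine ENNReal.ofReal_le_ofReal (by linarith)
      _ < ENNReal.ofReal (r' : ℝ) := by
          rw [ENNReal.ofReal_lt_ofReal_iff hr'pos]; linarith
      _ = (r' : ℝ≥0∞) := ENNReal.ofReal_coe_nnreal
      _ < r := hr'r
  have hsum0 := (LPaux.mgfSeries X μ u0).summable_norm_mul_pow hlt
  have hcoe : (((2*ρ).toNNReal : ℝ≥0) : ℝ) = 2*ρ := Real.coe_toNNReal _ (by linarith)
  have hsum : Summable (fun n : ℕ => (2*ρ) ^ n / n ! * ∫ ω, X ω ^ n * Real.exp (u0 * X ω) ∂μ) := by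
    refine hsum0.congr fun n => ?_
    rw [hcoe, LPaux.mgfSeries, FormalMultilinearSeries.ofScalars_norm, Real.norm_eq_abs,
      abs_of_nonneg (div_nonneg (LPaux.integral_pow_nonneg hXpos u0 n) (by positivity))]
    ring
  have hint := LPaux.integrable_backward hX hXpos hu0v hv (by linarith : (0:ℝ) ≤ 2*ρ) hsum
  have hle : u0 + 2*ρ ≤ β := hβ ▸ le_csSup hbdd hint
  simp only [hu0def] at hle
  linarith
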